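/- Let p be an odd prime, m, k positive integers with m/gcd(k,m) ≥ 3 odd, and write e = gcd(k,m), h = m/e, q = p^e. For (u,v) ∈ F_{p^m}² \ {(0,0)}, consider the quadratic form Q_{u,v}(x) = Tr^m_e(u x^{p^k+1} + v x²) over F_q. Then the rank of Q_{u,v} is h, h−1, or h−2; in particular Q_{u,0} (u ≠ 0) and Q_{0,v} (v ≠ 0) both have rank h. -/

import Mathlib

/-- The relative trace `Tr^m_e` from `F_{p^m}` to `F_{p^e}` (with `h = m/e`),
computed inside the big field: `x ↦ ∑_{i<h} x^{p^{e i}}`. -/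
noncomputable def relTrace (p e h : ℕ) {F : Type*} [Field F] (x : F) : F :=
  ∑ i ∈ Finset.range h, x ^ p ^ (e * i)

open Polynomial Finset

section Helpers
variable {F : Type*} [Field F] {p : ℕ}

lemma iterFix (k t : ℕ) (x : F) (h : x ^ p ^ k = x) : x ^ p ^ (k * t) = x := by
  induction t with
  | zero => simp
  | succ n ih => rw [Nat.mul_succ, pow_add, pow_mul, ih, h]

lemma gcdFix : ∀ k m : ℕ, ∀ x : F, x ^ p ^ k = x → x ^ p ^ m = x → x ^ p ^ (Nat.gcd k m) = x := by
  intro k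
  induction k using Nat.strong_induction_on with
  | _ k ih =>
    intro m x h1 h2
    rcases Nat.eq_zero_or_pos k with hk | hk
    · subst hk; simpa using h2
    · rw [Nat.gcd_rec]
      refine ih (m % k) (Nat.mod_lt _ hk) k x ?_ h1
      have h3 : x ^ p ^ (k * (m / k)) = x := iterFix _ _ _ h1
      have h4 : k * (m / k) + m % k = m := Nat.div_add_mod m k
      calc x ^ p ^ (m % k) = (x ^ p ^ (k * (m/k))) ^ p ^ (m % k) := by rw [h3]
        _ = x := by rw [← pow_mul, ← pow_add, h4]; exact h2

variable [Fact p.Prime] [CharP F p] {e h : ℕ}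

lemma relTrace_add (x y : F) : relTrace p e h (x + y) = relTrace p e h x + relTrace p e h y := by
  unfold relTrace
  rw [← Finset.sum_add_distrib]
  exact Finset.sum_congr rfl fun i _ => add_pow_char_pow x y p (e * i)

lemma relTrace_zero : relTrace p e h (0 : F) = 0 := by
  unfold relTrace
  refine Finset.sum_eq_zero fun i _ => ?_
  exact zero_pow (pow_ne_zero _ (Fact.out : p.Prime).pos.ne')

lemma relTrace_neg (x : F) : relTrace p e h (-x) = - relTrace p e h x := by
  have := relTrace_add (p := p) (e := e) (h := h) x (-x)
  rw [add_neg_cancel, relTrace_zero] at this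
  exact eq_neg_of_add_eq_zero_right this.symm

lemma relTrace_sub (x y : F) : relTrace p e h (x - y) = relTrace p e h x - relTrace p e h y := by
  rw [sub_eq_add_neg, relTrace_add, relTrace_neg, sub_eq_add_neg]

lemma relTrace_smul (c y : F) (hc : c ^ p ^ e = c) :
    relTrace p e h (c * y) = c * relTrace p e h y := by
  unfold relTrace
  rw [Finset.mul_sum]
  refine Finset.sum_congr rfl fun i _ => ?_
  rw [mul_pow, iterFix e i c hc]

end Helpers

section Helpers2
variable {F : Type*} [Field F] {p : ℕ} [Fact p.Prime] [CharP F p] {e h : ℕ}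

lemma relTrace_frob (hfrob : ∀ x : F, x ^ p ^ (e * h) = x) (y : F) :
    relTrace p e h (y ^ p ^ e) = relTrace p e h y := by
  unfold relTrace
  have key : ∀ i : ℕ, (y ^ p ^ e) ^ p ^ (e * i) = y ^ p ^ (e * (i + 1)) := by
    intro i
    rw [← pow_mul, ← pow_add]
    congr 1
    ring
  calc ∑ i ∈ Finset.range h, (y ^ p ^ e) ^ p ^ (e * i)
      = ∑ i ∈ Finset.range h, y ^ p ^ (e * (i + 1)) := by
        exact Finset.sum_congr rfl fun i _ => key i
    _ = ∑ i ∈ Finset.range h, y ^ p ^ (e * i) := by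
        rcases Nat.eq_zero_or_pos h with h0 | h0
        · simp [h0]
        · have e1 : ∑ i ∈ Finset.range (h + 1), y ^ p ^ (e * i)
              = (∑ i ∈ Finset.range h, y ^ p ^ (e * (i + 1))) + y ^ p ^ (e * 0) :=
            Finset.sum_range_succ' _ h
          have e2 : ∑ i ∈ Finset.range (h + 1), y ^ p ^ (e * i)
              = (∑ i ∈ Finset.range h, y ^ p ^ (e * i)) + y ^ p ^ (e * h) :=
            Finset.sum_range_succ _ h
          rw [hfrob y] at e2
          have : y ^ p ^ (e * 0) = y := by simp
          rw [this] at e1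
          have := e1.symm.trans e2
          exact add_right_cancel this

lemma relTrace_frob_iter (hfrob : ∀ x : F, x ^ p ^ (e * h) = x) (y : F) (j : ℕ) :
    relTrace p e h (y ^ p ^ (e * j)) = relTrace p e h y := by
  induction j with
  | zero => simp
  | succ n ih =>
    have : y ^ p ^ (e * (n + 1)) = (y ^ p ^ (e * n)) ^ p ^ e := by
      rw [← pow_mul, ← pow_add, Nat.mul_succ]
    rw [this, relTrace_frob hfrob, ih]

end Helpers2

section RootBound
variable {F : Type*} [Field F]

lemma card_eval_zero_le (f : Polynomial F) (hf : f ≠ 0) :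
    Nat.card {x : F | f.eval x = 0} ≤ f.natDegree := by
  classical
  have hsub : {x : F | f.eval x = 0} ⊆ ↑f.roots.toFinset := by
    intro x hx
    simp only [Finset.coe_sort_coe, Multiset.mem_toFinset, Finset.mem_coe]
    exact (Polynomial.mem_roots hf).mpr hx
  calc Nat.card {x : F | f.eval x = 0}
      ≤ Nat.card ↥(↑f.roots.toFinset : Set F) := Nat.card_mono (Finset.finite_toSet _) hsub
    _ = f.roots.toFinset.card := by rw [Nat.card_coe_set_eq, Set.ncard_coe_finset]
    _ ≤ Multiset.card f.roots := f.roots.toFinset_card_le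
    _ ≤ f.natDegree := f.card_roots'

end RootBound

section TracePoly
open Polynomial
variable {F : Type*} [Field F] {p : ℕ} [Fact p.Prime] [CharP F p]

noncomputable def tracePoly (p e h : ℕ) (F : Type*) [Field F] : Polynomial F :=
  ∑ i ∈ Finset.range h, X ^ p ^ (e * i)

lemma tracePoly_eval (e h : ℕ) (x : F) : (tracePoly p e h F).eval x = relTrace p e h x := by
  simp [tracePoly, relTrace, Polynomial.eval_finset_sum]

lemma tracePoly_natDegree_le (e h : ℕ) :
    (tracePoly p e h F).natDegree ≤ p ^ (e * (h - 1)) := by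
  refine Polynomial.natDegree_sum_le_of_forall_le _ _ fun i hi => ?_
  rw [Polynomial.natDegree_X_pow]
  exact Nat.pow_le_pow_right (Fact.out : p.Prime).pos
    (Nat.mul_le_mul_left e (Nat.le_pred_of_lt (Finset.mem_range.mp hi)))

lemma tracePoly_ne_zero (e h : ℕ) (he : 0 < e) (hh : 0 < h) : tracePoly p e h F ≠ 0 := by
  intro hzero
  have hcoeff : (tracePoly p e h F).coeff (p ^ (e * (h - 1))) = 1 := by
    unfold tracePoly
    rw [Polynomial.finset_sum_coeff]
    have hiff : ∀ i, p ^ (e * (h - 1)) = p ^ (e * i) ↔ i = h - 1 := by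
      intro i
      constructor
      · intro hpi
        have := Nat.pow_right_injective (Fact.out : p.Prime).two_le hpi.symm
        exact Nat.eq_of_mul_eq_mul_left he this
      · rintro rfl; rfl
    calc ∑ i ∈ Finset.range h, (X ^ p ^ (e * i) : Polynomial F).coeff (p ^ (e * (h - 1)))
        = ∑ i ∈ Finset.range h, if i = h - 1 then (1 : F) else 0 := by
          refine Finset.sum_congr rfl fun i _ => ?_
          rw [Polynomial.coeff_X_pow, if_congr (hiff i) rfl rfl]
      _ = 1 := by
          rw [Finset.sum_ite_eq' (Finset.range h) (h - 1) (fun _ => (1:F))]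
          simp [Nat.sub_lt hh]
  rw [hzero] at hcoeff
  simp at hcoeff

lemma relTrace_exists_ne_zero (e h : ℕ) (he : 0 < e) (hh : 0 < h) [Fintype F]
    (hcard : Fintype.card F = p ^ (e * h)) : ∃ y : F, relTrace p e h y ≠ 0 := by
  by_contra hall
  push_neg at hall
  have hsub : (Set.univ : Set F) ⊆ {x : F | (tracePoly p e h F).eval x = 0} := by
    intro x _
    simp only [Set.mem_setOf_eq, tracePoly_eval]
    exact hall x
  have h1 : Nat.card F ≤ (tracePoly p e h F).natDegree := by
    calc Nat.card F = Nat.card (Set.univ : Set F) := by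
          rw [Nat.card_congr (Equiv.Set.univ F)]
      _ ≤ Nat.card {x : F | (tracePoly p e h F).eval x = 0} :=
          Nat.card_mono (Set.toFinite _) hsub
      _ ≤ _ := card_eval_zero_le _ (tracePoly_ne_zero e h he hh)
  rw [Nat.card_eq_fintype_card, hcard] at h1
  have h2 : (tracePoly p e h F).natDegree ≤ p ^ (e * (h - 1)) := tracePoly_natDegree_le e h
  have h3 : p ^ (e * h) ≤ p ^ (e * (h - 1)) := le_trans h1 h2
  have h4 : e * (h - 1) < e * h := by
    have : h - 1 < h := Nat.sub_lt hh one_pos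
    exact (Nat.mul_lt_mul_left he).mpr this
  exact absurd h3 (not_le.mpr (Nat.pow_lt_pow_right (Fact.out : p.Prime).one_lt h4))

end TracePoly

section CardE
open Polynomial
variable {F : Type*} [Field F] {p : ℕ} [Fact p.Prime] [CharP F p] [Fintype F]

lemma card_fixed_field (e h : ℕ) (he : 0 < e) (hh : 0 < h)
    (hcard : Fintype.card F = p ^ (e * h))
    (hfrob : ∀ x : F, x ^ p ^ (e * h) = x) :
    Nat.card {x : F | x ^ p ^ e = x} = p ^ e := by
  classical
  set g : F →+ F := {
    toFun := fun x => x ^ p ^ e - x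
    map_zero' := by simp [zero_pow (pow_ne_zero e (Fact.out : p.Prime).pos.ne')]
    map_add' := by
      intro a b
      show (a + b) ^ p ^ e - (a + b) = (a ^ p ^ e - a) + (b ^ p ^ e - b)
      rw [add_pow_char_pow]
      ring }
  have hkerset : ((g.ker : Set F)) = {x : F | x ^ p ^ e = x} := by
    ext x
    simp only [SetLike.mem_coe, AddMonoidHom.mem_ker, Set.mem_setOf_eq]
    show x ^ p ^ e - x = 0 ↔ _
    rw [sub_eq_zero]
  -- kernel bound
  have hker_le : Nat.card g.ker ≤ p ^ e := by
    have hne : (X ^ p ^ e - X : Polynomial F) ≠ 0 :=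
      FiniteField.X_pow_card_pow_sub_X_ne_zero F he.ne' (Fact.out : p.Prime).one_lt
    have hdeg : (X ^ p ^ e - X : Polynomial F).natDegree = p ^ e :=
      FiniteField.X_pow_card_pow_sub_X_natDegree_eq F he.ne' (Fact.out : p.Prime).one_lt
    have hsub : ((g.ker : Set F)) ⊆ {x : F | (X ^ p ^ e - X : Polynomial F).eval x = 0} := by
      intro x hx
      rw [hkerset] at hx
      simp only [Set.mem_setOf_eq, Polynomial.eval_sub, Polynomial.eval_pow,
        Polynomial.eval_X]
      rw [hx.out]; ring
    calc Nat.card g.ker = Nat.card (g.ker : Set F) := rfl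
      _ ≤ Nat.card {x : F | (X ^ p ^ e - X : Polynomial F).eval x = 0} :=
          Nat.card_mono (Set.toFinite _) hsub
      _ ≤ _ := le_trans (card_eval_zero_le _ hne) (le_of_eq hdeg)
  -- range bound
  have hrange_le : Nat.card g.range ≤ p ^ (e * (h - 1)) := by
    have hsub : ((g.range : Set F)) ⊆ {y : F | (tracePoly p e h F).eval y = 0} := by
      rintro y ⟨x, rfl⟩
      simp only [Set.mem_setOf_eq, tracePoly_eval]
      show relTrace p e h (x ^ p ^ e - x) = 0
      rw [relTrace_sub, relTrace_frob hfrob, sub_self]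
    calc Nat.card g.range = Nat.card (g.range : Set F) := rfl
      _ ≤ Nat.card {y : F | (tracePoly p e h F).eval y = 0} :=
          Nat.card_mono (Set.toFinite _) hsub
      _ ≤ (tracePoly p e h F).natDegree := card_eval_zero_le _ (tracePoly_ne_zero e h he hh)
      _ ≤ _ := tracePoly_natDegree_le e h
  have hsplit : Nat.card F = Nat.card g.range * Nat.card g.ker := by
    rw [AddSubgroup.card_eq_card_quotient_mul_card_addSubgroup g.ker]
    congr 1
    exact Nat.card_congr (QuotientAddGroup.quotientKerEquivRange g).toEquiv
  have hF : Nat.card F = p ^ (e * (h - 1)) * p ^ e := by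
    rw [Nat.card_eq_fintype_card, hcard, ← pow_add]
    congr 1
    have h1 : h - 1 + 1 = h := Nat.succ_pred_eq_of_pos hh
    calc e * h = e * (h - 1 + 1) := by rw [h1]
      _ = e * (h - 1) + e := by ring
  have hker_ge : p ^ e ≤ Nat.card g.ker := by
    by_contra hlt
    push_neg at hlt
    have : Nat.card F < p ^ (e * (h - 1)) * p ^ e := by
      calc Nat.card F = Nat.card g.range * Nat.card g.ker := hsplit
        _ ≤ p ^ (e * (h - 1)) * Nat.card g.ker := Nat.mul_le_mul_right _ hrange_le
        _ < p ^ (e * (h - 1)) * p ^ e := by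
            exact (Nat.mul_lt_mul_left (Nat.pow_pos (Fact.out : p.Prime).pos)).mpr hlt
    omega
  have : Nat.card g.ker = p ^ e := le_antisymm hker_le hker_ge
  calc Nat.card {x : F | x ^ p ^ e = x} = Nat.card (g.ker : Set F) := by rw [hkerset]
    _ = p ^ e := this

end CardE

section Norm
variable {F : Type*} [Field F] {p : ℕ} [Fact p.Prime]

noncomputable def relNorm (p e h : ℕ) {F : Type*} [Field F] (x : F) : F :=
  ∏ i ∈ Finset.range h, x ^ p ^ (e * i)

lemma relNorm_mul (e h : ℕ) (x y : F) :
    relNorm p e h (x * y) = relNorm p e h x * relNorm p e h y := by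
  unfold relNorm
  rw [← Finset.prod_mul_distrib]
  exact Finset.prod_congr rfl fun i _ => mul_pow x y _

lemma relNorm_ne_zero (e h : ℕ) (x : F) (hx : x ≠ 0) : relNorm p e h x ≠ 0 :=
  Finset.prod_ne_zero_iff.mpr fun i _ => pow_ne_zero _ hx

lemma relNorm_pow (e h n : ℕ) (x : F) : relNorm p e h (x ^ n) = relNorm p e h x ^ n := by
  unfold relNorm
  rw [← Finset.prod_pow]
  exact Finset.prod_congr rfl fun i _ => by rw [← pow_mul, ← pow_mul, mul_comm (p ^ (e*i)) n]

lemma relNorm_neg_one (e h : ℕ) (hp : Odd p) (hh : Odd h) :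
    relNorm p e h (-1 : F) = -1 := by
  unfold relNorm
  have : ∀ i ∈ Finset.range h, ((-1 : F)) ^ p ^ (e * i) = -1 := by
    intro i _
    exact Odd.neg_one_pow (hp.pow)
  rw [Finset.prod_congr rfl this, Finset.prod_const, Finset.card_range]
  exact Odd.neg_one_pow hh

lemma relNorm_frob (e h : ℕ) (hfrob : ∀ x : F, x ^ p ^ (e * h) = x) (y : F) :
    (relNorm p e h y) ^ p ^ e = relNorm p e h y := by
  unfold relNorm
  rw [← Finset.prod_pow]
  have key : ∀ i : ℕ, (y ^ p ^ (e * i)) ^ p ^ e = y ^ p ^ (e * (i + 1)) := by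
    intro i
    rw [← pow_mul, ← pow_add, Nat.mul_succ]
  calc ∏ i ∈ Finset.range h, (y ^ p ^ (e * i)) ^ p ^ e
      = ∏ i ∈ Finset.range h, y ^ p ^ (e * (i + 1)) :=
        Finset.prod_congr rfl fun i _ => key i
    _ = ∏ i ∈ Finset.range h, y ^ p ^ (e * i) := by
        rcases Nat.eq_zero_or_pos h with h0 | h0
        · simp [h0]
        · rcases eq_or_ne y 0 with rfl | hy
          · have z : ∀ j : ℕ, (0:F) ^ p ^ j = 0 := fun j =>
              zero_pow (pow_ne_zero _ (Fact.out : p.Prime).pos.ne')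
            rw [Finset.prod_eq_zero (Finset.mem_range.mpr h0) (z _),
              Finset.prod_eq_zero (Finset.mem_range.mpr h0) (z _)]
          · have e1 := Finset.prod_range_succ' (fun i => y ^ p ^ (e * i)) h
            have e2 := Finset.prod_range_succ (fun i => y ^ p ^ (e * i)) h
            simp only [hfrob y, Nat.mul_zero, pow_zero, pow_one] at e1 e2
            have := e1.symm.trans e2
            exact mul_right_cancel₀ hy this

end Norm

theorem rank_of_Quv (p m k : ℕ) (hp : p.Prime) (hodd : Odd p) (hk : 0 < k)
    (e h : ℕ) (he : e = Nat.gcd k m) (hh : h = m / e) (hge : 3 ≤ h) (hoddh : Odd h)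
    (F : Type*) [Field F] [Fintype F] (hcard : Fintype.card F = p ^ m)
    (u v : F) (huv : (u, v) ≠ (0, 0)) :
    ∃ r : ℕ, (r = h ∨ r = h - 1 ∨ r = h - 2) ∧
      Nat.card {z : F // ∀ x : F,
          relTrace p e h (u * (x + z) ^ (p ^ k + 1) + v * (x + z) ^ 2)
            = relTrace p e h (u * x ^ (p ^ k + 1) + v * x ^ 2)}
        = p ^ (e * (h - r)) ∧
      (((u ≠ 0 ∧ v = 0) ∨ (u = 0 ∧ v ≠ 0)) → r = h) := by
  haveI : Fact p.Prime := ⟨hp⟩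
  -- basic numerology
  have he0 : 0 < e := by rw [he]; exact Nat.gcd_pos_of_pos_left m hk
  have h0 : 0 < h := by omega
  have hedvdm : e ∣ m := by rw [he]; exact Nat.gcd_dvd_right k m
  have hem : e * h = m := by rw [hh]; exact Nat.mul_div_cancel' hedvdm
  have hekdvd : e ∣ k := by rw [he]; exact Nat.gcd_dvd_left k m
  obtain ⟨k', hkk'⟩ := hekdvd
  -- characteristic
  haveI hcharF : CharP F p := by
    haveI := ringChar.charP F
    obtain ⟨n, hrp, hcard'⟩ := FiniteField.card F (ringChar F)
    have hdvd : ringChar F ∣ p ^ m := by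
      rw [← hcard, hcard']
      exact dvd_pow_self _ (by positivity : (0:ℕ) < (n:ℕ)).ne'
    have : ringChar F = p :=
      (Nat.prime_dvd_prime_iff_eq hrp hp).mp (hrp.dvd_of_dvd_pow hdvd)
    rw [← this]
    exact ringChar.charP F
  have hfrob : ∀ x : F, x ^ p ^ (e * h) = x := by
    intro x; rw [hem, ← hcard]; exact FiniteField.pow_card x
  have two_ne : (2 : F) ≠ 0 := by
    have hp2 : p ≠ 2 := by
      rintro rfl
      exact (by norm_num : ¬ Odd 2) hodd
    have hpd2 : ¬ (p ∣ 2) := fun hdvd =>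
      hp2 ((Nat.prime_dvd_prime_iff_eq hp Nat.prime_two).mp hdvd)
    have : ¬((2:ℕ):F) = 0 := by rw [CharP.cast_eq_zero_iff F p 2]; exact hpd2
    simpa using this
  -- the auxiliary exponent d
  set d : ℕ := e * (k' * (2 * h - 1)) with hd_def
  have hkd : k + d = e * h * (2 * k') := by
    have h1 : 2 * h - 1 + 1 = 2 * h := by omega
    calc k + d = e * k' * (2 * h - 1 + 1) := by rw [hkk', hd_def]; ring
      _ = e * k' * (2 * h) := by rw [h1]
      _ = e * h * (2 * k') := by ring
  have hxkd : ∀ x : F, x ^ p ^ (k + d) = x := by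
    intro x; rw [hkd]; exact iterFix _ _ _ (hfrob x)
  have hxm : ∀ x : F, x ^ p ^ m = x := by
    intro x; rw [← hem]; exact hfrob x
  have Tshift : ∀ y : F, relTrace p e h (y ^ p ^ d) = relTrace p e h y := by
    intro y; rw [hd_def]; exact relTrace_frob_iter hfrob y _
  set cpoly : F → F := fun z => u ^ p ^ d * z ^ p ^ d + u * z ^ p ^ k + 2 * v * z
    with hcpoly_def
  set Q : F → F := fun y => relTrace p e h (u * y ^ (p ^ k + 1) + v * y ^ 2) with hQ_def
  have hQ0 : Q 0 = 0 := by
    have : (0:F) ^ (p ^ k + 1) = 0 := zero_pow (by positivity)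
    simp only [hQ_def, this, mul_zero, zero_pow two_ne_zero, add_zero, relTrace_zero]
  -- bilinear term transformation
  have l1 : ∀ x z : F, relTrace p e h (u * x ^ p ^ k * z)
      = relTrace p e h (u ^ p ^ d * z ^ p ^ d * x) := by
    intro x z
    conv_lhs => rw [← Tshift (u * x ^ p ^ k * z)]
    congr 1
    rw [mul_pow, mul_pow, ← pow_mul,
      show p ^ k * p ^ d = p ^ (k + d) from by rw [← pow_add], hxkd x]
    ring
  -- key expansion
  have hexp : ∀ x z : F, Q (x + z) = Q x + relTrace p e h (cpoly z * x) + Q z := by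
    intro x z
    have hfr : (x + z) ^ p ^ k = x ^ p ^ k + z ^ p ^ k := add_pow_char_pow x z p k
    have ring1 : u * (x + z) ^ (p ^ k + 1) + v * (x + z) ^ 2
        = (u * x ^ (p ^ k + 1) + v * x ^ 2)
          + (u * x ^ p ^ k * z + (u * (z ^ p ^ k * x) + 2 * v * (z * x)))
          + (u * z ^ (p ^ k + 1) + v * z ^ 2) := by
      simp only [pow_succ, hfr]
      ring
    have step : Q (x + z)
        = Q x + relTrace p e h (u * x ^ p ^ k * z + (u * (z ^ p ^ k * x) + 2 * v * (z * x)))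
          + Q z := by
      simp only [hQ_def]
      rw [ring1, relTrace_add, relTrace_add]
    rw [step]
    congr 1
    congr 1
    rw [relTrace_add, l1 x z, ← relTrace_add]
    congr 1
    simp only [hcpoly_def]
    ring
  -- nondegeneracy
  have ndg : ∀ c : F, (∀ x : F, relTrace p e h (c * x) = 0) → c = 0 := by
    intro c hc
    by_contra hc0
    obtain ⟨y, hy⟩ := relTrace_exists_ne_zero e h he0 h0 (by rw [hem]; exact hcard)
    apply hy
    have := hc (c⁻¹ * y)
    rwa [← mul_assoc, mul_inv_cancel₀ hc0, one_mul] at this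
  -- characterization of the radical
  set S : Set F := {z | cpoly z = 0 ∧ Q z = 0} with hS_def
  have hchar_set : ∀ z : F, (∀ x : F, Q (x + z) = Q x) ↔ z ∈ S := by
    intro z
    constructor
    · intro hz
      have hz0 := hz 0
      rw [zero_add, hQ0] at hz0
      have hTzero : ∀ x : F, relTrace p e h (cpoly z * x) = 0 := by
        intro x
        have := hexp x z
        rw [hz x, hz0, add_zero] at this
        exact (left_eq_add.mp this)
      exact ⟨ndg _ hTzero, hz0⟩
    · rintro ⟨h1, h2⟩ x
      rw [hexp x z, h1, h2, zero_mul, relTrace_zero, add_zero, add_zero]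
  have hScard : Nat.card {z : F // ∀ x : F,
      relTrace p e h (u * (x + z) ^ (p ^ k + 1) + v * (x + z) ^ 2)
        = relTrace p e h (u * x ^ (p ^ k + 1) + v * x ^ 2)} = Nat.card ↥S :=
    Nat.card_congr (Equiv.subtypeEquivRight fun z => hchar_set z)
  -- closure properties of S
  have hS0 : (0 : F) ∈ S := by
    constructor
    · simp only [hcpoly_def]
      rw [zero_pow (pow_ne_zero d hp.pos.ne'), zero_pow (pow_ne_zero k hp.pos.ne')]
      ring
    · exact hQ0
  have hSadd : ∀ z₁ ∈ S, ∀ z₂ ∈ S, z₁ + z₂ ∈ S := by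
    intro z₁ hz₁ z₂ hz₂
    constructor
    · show cpoly (z₁ + z₂) = 0
      have : cpoly (z₁ + z₂) = cpoly z₁ + cpoly z₂ := by
        simp only [hcpoly_def]
        rw [add_pow_char_pow z₁ z₂ p d, add_pow_char_pow z₁ z₂ p k]
        ring
      rw [this, hz₁.1, hz₂.1, add_zero]
    · show Q (z₁ + z₂) = 0
      rw [hexp z₁ z₂, hz₁.2, hz₂.2, hz₂.1, zero_mul, relTrace_zero]
      ring
  have hSsmul : ∀ lam : F, lam ^ p ^ e = lam → ∀ z ∈ S, lam * z ∈ S := by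
    intro lam hlam z hz
    have hlamk : lam ^ p ^ k = lam := by rw [hkk']; exact iterFix _ _ _ hlam
    have hlamd : lam ^ p ^ d = lam := by rw [hd_def]; exact iterFix _ _ _ hlam
    constructor
    · show cpoly (lam * z) = 0
      have : cpoly (lam * z) = lam * cpoly z := by
        simp only [hcpoly_def]
        rw [mul_pow, mul_pow, hlamk, hlamd]
        ring
      rw [this, hz.1, mul_zero]
    · show Q (lam * z) = 0
      have harg : u * (lam * z) ^ (p ^ k + 1) + v * (lam * z) ^ 2
          = lam ^ 2 * (u * z ^ (p ^ k + 1) + v * z ^ 2) := by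
        simp only [pow_succ, mul_pow, hlamk]
        ring
      have hlam2 : (lam ^ 2) ^ p ^ e = lam ^ 2 := by
        rw [← pow_mul, mul_comm 2 (p ^ e), pow_mul, hlam]
      show relTrace p e h _ = 0
      rw [harg, relTrace_smul _ _ hlam2]
      have := hz.2
      simp only [hQ_def] at this
      rw [this, mul_zero]
  -- the semilinear recurrence
  have hrec : ∀ z ∈ S, u ^ p ^ k * z ^ p ^ (2 * k) + 2 * v ^ p ^ k * z ^ p ^ k + u * z = 0 := by
    intro z hz
    have h1 : cpoly z = 0 := hz.1
    have h2 : (cpoly z) ^ p ^ k = 0 := by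
      rw [h1]; exact zero_pow (pow_ne_zero k hp.pos.ne')
    simp only [hcpoly_def] at h2
    rw [add_pow_char_pow _ _ p k, add_pow_char_pow _ _ p k] at h2
    have e1 : (u ^ p ^ d * z ^ p ^ d) ^ p ^ k = u * z := by
      rw [mul_pow, ← pow_mul, ← pow_mul,
        show p ^ d * p ^ k = p ^ (k + d) from by rw [← pow_add, Nat.add_comm], hxkd u, hxkd z]
    have e2 : (u * z ^ p ^ k) ^ p ^ k = u ^ p ^ k * z ^ p ^ (2 * k) := by
      rw [mul_pow, ← pow_mul,
        show p ^ k * p ^ k = p ^ (2 * k) from by rw [← pow_add, two_mul]]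
    have e3 : (2 * v * z) ^ p ^ k = 2 * v ^ p ^ k * z ^ p ^ k := by
      have h2pk : (2 : F) ^ p ^ k = 2 := by
        have h12 : (1:F) + 1 = 2 := one_add_one_eq_two
        rw [← h12, add_pow_char_pow 1 1 p k, one_pow]
      rw [mul_pow, mul_pow, h2pk]
    rw [e1, e2, e3] at h2
    linear_combination h2
  -- Wronskian
  set Wr : F → F → F := fun a b => a * b ^ p ^ k - b * a ^ p ^ k with hWr_def
  have hwrpow : ∀ a b : F, (Wr a b) ^ p ^ k
      = a ^ p ^ k * b ^ p ^ (2 * k) - b ^ p ^ k * a ^ p ^ (2 * k) := by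
    intro a b
    simp only [hWr_def]
    rw [sub_pow_char_pow, mul_pow, mul_pow, ← pow_mul, ← pow_mul,
      show p ^ k * p ^ k = p ^ (2 * k) from by rw [← pow_add, two_mul]]
  have hwr : ∀ a ∈ S, ∀ b ∈ S, u ^ p ^ k * (Wr a b) ^ p ^ k = u * Wr a b := by
    intro a ha b hb
    rw [hwrpow a b]
    simp only [hWr_def]
    linear_combination a ^ p ^ k * hrec b hb - b ^ p ^ k * hrec a ha
  -- fixed subfield
  set E : Set F := {x : F | x ^ p ^ e = x} with hE_def
  have hcardE : Nat.card ↥E = p ^ e :=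
    card_fixed_field e h he0 h0 (by rw [hem]; exact hcard) hfrob
  have hEfix : ∀ lam : F, lam ^ p ^ k = lam → lam ∈ E := by
    intro lam hlamk
    have hlamm : lam ^ p ^ m = lam := hxm lam
    have := gcdFix k m lam hlamk hlamm
    rwa [← he] at this
  -- the determinant identity
  have hdet : ∀ a b c : F, a * Wr b c = Wr a c * b - Wr a b * c := by
    intro a b c
    simp only [hWr_def]
    ring
  -- main case analysis
  rcases eq_or_ne u 0 with hu | hu
  · -- u = 0, v ≠ 0 : radical is 0
    have hv : v ≠ 0 := by
      rintro rfl
      exact huv (by rw [hu])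
    have hSzero : S = {0} := by
      ext z
      simp only [Set.mem_singleton_iff]
      constructor
      · rintro ⟨h1, _⟩
        simp only [hcpoly_def, hu, zero_mul, zero_pow (pow_ne_zero d hp.pos.ne'),
          zero_add] at h1
        rcases mul_eq_zero.mp h1 with h2 | h2
        · exact absurd (mul_eq_zero.mp h2) (by push_neg; exact ⟨two_ne, hv⟩)
        · exact h2
      · rintro rfl; exact hS0
    refine ⟨h, Or.inl rfl, ?_, fun _ => rfl⟩
    rw [hScard, hSzero, Nat.sub_self, Nat.mul_zero, pow_zero]
    rw [Nat.card_coe_set_eq, Set.ncard_singleton]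
  rcases eq_or_ne v 0 with hv | hv
  · -- u ≠ 0, v = 0 : radical is 0 by the norm argument
    have hSzero : S = {0} := by
      ext z
      simp only [Set.mem_singleton_iff]
      constructor
      · intro hz
        by_contra hz0
        have hr := hrec z hz
        rw [hv] at hr
        have hr' : u ^ p ^ k * z ^ p ^ (2 * k) = (-1) * (u * z) := by
          rw [zero_pow (pow_ne_zero k hp.pos.ne')] at hr
          linear_combination hr
        have hNm := congrArg (relNorm p e h) hr'
        rw [relNorm_mul, relNorm_mul, relNorm_mul, relNorm_pow, relNorm_pow,
          relNorm_neg_one e h hodd hoddh] at hNm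
        have hNu : relNorm p e h u ^ p ^ k = relNorm p e h u := by
          rw [hkk']; exact iterFix _ _ _ (relNorm_frob e h hfrob u)
        have hNz : relNorm p e h z ^ p ^ (2 * k) = relNorm p e h z := by
          rw [hkk', show 2 * (e * k') = e * (2 * k') from by ring]
          exact iterFix _ _ _ (relNorm_frob e h hfrob z)
        rw [hNu, hNz] at hNm
        have h2 : (2 : F) * (relNorm p e h u * relNorm p e h z) = 0 := by
          linear_combination hNm
        rcases mul_eq_zero.mp h2 with h3 | h3
        · exact two_ne h3
        · rcases mul_eq_zero.mp h3 with h4 | h4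
          · exact relNorm_ne_zero e h u hu h4
          · exact relNorm_ne_zero e h z hz0 h4
      · rintro rfl; exact hS0
    refine ⟨h, Or.inl rfl, ?_, fun _ => rfl⟩
    rw [hScard, hSzero, Nat.sub_self, Nat.mul_zero, pow_zero]
    rw [Nat.card_coe_set_eq, Set.ncard_singleton]
  · -- u ≠ 0, v ≠ 0
    have hspec : ((u ≠ 0 ∧ v = 0) ∨ (u = 0 ∧ v ≠ 0)) → False := by
      rintro (⟨_, h1⟩ | ⟨h1, _⟩)
      · exact hv h1
      · exact hu h1
    have hEk : ∀ a : F, a ∈ E → a ^ p ^ k = a := by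
      intro a ha
      rw [hkk']; exact iterFix _ _ _ ha
    by_cases hA : ∃ z₂ ∈ S, ∃ z₃ ∈ S, Wr z₂ z₃ ≠ 0
    · -- rank h - 2
      obtain ⟨z₂, hz₂, z₃, hz₃, hD⟩ := hA
      have hz₃0 : z₃ ≠ 0 := by
        rintro rfl
        apply hD
        simp only [hWr_def]
        rw [zero_pow (pow_ne_zero k hp.pos.ne')]
        ring
      have hupk : u ^ p ^ k ≠ 0 := pow_ne_zero _ hu
      have hratio : ∀ A : F, u ^ p ^ k * A ^ p ^ k = u * A → (A * (Wr z₂ z₃)⁻¹) ∈ E := by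
        intro A hArel
        apply hEfix
        have hDrel := hwr z₂ hz₂ z₃ hz₃
        have key : u ^ p ^ k * (A ^ p ^ k * Wr z₂ z₃)
            = u ^ p ^ k * (A * (Wr z₂ z₃) ^ p ^ k) := by
          calc u ^ p ^ k * (A ^ p ^ k * Wr z₂ z₃)
              = (u ^ p ^ k * A ^ p ^ k) * Wr z₂ z₃ := by ring
            _ = (u * A) * Wr z₂ z₃ := by rw [hArel]
            _ = A * (u * Wr z₂ z₃) := by ring
            _ = A * (u ^ p ^ k * (Wr z₂ z₃) ^ p ^ k) := by rw [← hDrel]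
            _ = _ := by ring
        have key' : A ^ p ^ k * Wr z₂ z₃ = A * (Wr z₂ z₃) ^ p ^ k :=
          mul_left_cancel₀ hupk key
        have hDk : (Wr z₂ z₃ : F) ^ p ^ k ≠ 0 := pow_ne_zero _ hD
        rw [mul_pow, inv_pow]
        field_simp
        linear_combination key'
      set f : ↥E × ↥E → ↥S := fun ab =>
        ⟨ab.1.1 * z₂ + ab.2.1 * z₃,
          hSadd _ (hSsmul ab.1.1 ab.1.2 z₂ hz₂) _ (hSsmul ab.2.1 ab.2.2 z₃ hz₃)⟩
        with hf_def
      have hbij : Function.Bijective f := by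
        constructor
        · rintro ⟨⟨a, ha⟩, ⟨b, hb⟩⟩ ⟨⟨a', ha'⟩, ⟨b', hb'⟩⟩ heq
          have heq' : a * z₂ + b * z₃ = a' * z₂ + b' * z₃ := congrArg Subtype.val heq
          have hγk : (a - a') ^ p ^ k = a - a' := by
            rw [sub_pow_char_pow, hEk a ha, hEk a' ha']
          have hδk : (b' - b) ^ p ^ k = b' - b := by
            rw [sub_pow_char_pow, hEk b' hb', hEk b hb]
          have hγδ : (a - a') * z₂ = (b' - b) * z₃ := by linear_combination heq'
          have h1 : (a - a') * Wr z₂ z₃ = Wr ((a - a') * z₂) z₃ := by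
            simp only [hWr_def]
            rw [mul_pow, hγk]
            ring
          have h2 : Wr ((b' - b) * z₃) z₃ = 0 := by
            simp only [hWr_def]
            rw [mul_pow, hδk]
            ring
          have hγ0 : (a - a') * Wr z₂ z₃ = 0 := by rw [h1, hγδ, h2]
          have hγ : a - a' = 0 := by
            rcases mul_eq_zero.mp hγ0 with h' | h'
            · exact h'
            · exact absurd h' hD
          have hδ : b' - b = 0 := by
            have : (b' - b) * z₃ = 0 := by rw [← hγδ, hγ, zero_mul]
            rcases mul_eq_zero.mp this with h' | h'
            · exact h'
            · exact absurd h' hz₃0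
          have ha'' : a = a' := by linear_combination hγ
          have hb'' : b = b' := by linear_combination - hδ
          ext <;> simp [ha'', hb'']
        · rintro ⟨z, hz⟩
          set α : F := Wr z z₃ * (Wr z₂ z₃)⁻¹ with hα_def
          set β : F := (-(Wr z z₂)) * (Wr z₂ z₃)⁻¹ with hβ_def
          have hαE : α ∈ E := hratio _ (hwr z hz z₃ hz₃)
          have hβE : β ∈ E := by
            apply hratio
            rw [Odd.neg_pow (hodd.pow)]
            linear_combination - (hwr z hz z₂ hz₂)
          refine ⟨⟨⟨α, hαE⟩, ⟨β, hβE⟩⟩, ?_⟩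
          apply Subtype.ext
          show α * z₂ + β * z₃ = z
          have hdet' := hdet z z₂ z₃
          have hmul : (α * z₂ + β * z₃) * Wr z₂ z₃ = z * Wr z₂ z₃ := by
            rw [hα_def, hβ_def, hdet']
            field_simp
            ring
          exact mul_right_cancel₀ hD hmul
      refine ⟨h - 2, Or.inr (Or.inr rfl), ?_, fun hs => absurd hs hspec⟩
      rw [hScard, ← Nat.card_eq_of_bijective f hbij, Nat.card_prod, hcardE,
        show h - (h - 2) = 2 from by omega, show e * 2 = e + e from by ring, pow_add]
    · push_neg at hA
      by_cases hB : ∃ z₂ ∈ S, z₂ ≠ 0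
      · -- rank h - 1
        obtain ⟨z₂, hz₂, hz₂0⟩ := hB
        set f : ↥E → ↥S := fun a => ⟨a.1 * z₂, hSsmul a.1 a.2 z₂ hz₂⟩ with hf_def
        have hbij : Function.Bijective f := by
          constructor
          · rintro ⟨a, ha⟩ ⟨b, hb⟩ heq
            have heq' : a * z₂ = b * z₂ := congrArg Subtype.val heq
            exact Subtype.ext (mul_right_cancel₀ hz₂0 heq')
          · rintro ⟨z, hz⟩
            have hWr0 : Wr z z₂ = 0 := hA z hz z₂ hz₂
            have hWr0' : z * z₂ ^ p ^ k - z₂ * z ^ p ^ k = 0 := hWr0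
            have hlamk : (z * z₂⁻¹) ^ p ^ k = z * z₂⁻¹ := by
              rw [mul_pow, inv_pow]
              have hz₂k : (z₂ : F) ^ p ^ k ≠ 0 := pow_ne_zero _ hz₂0
              field_simp
              linear_combination - hWr0'
            refine ⟨⟨z * z₂⁻¹, hEfix _ hlamk⟩, ?_⟩
            apply Subtype.ext
            show z * z₂⁻¹ * z₂ = z
            field_simp
        refine ⟨h - 1, Or.inr (Or.inl rfl), ?_, fun hs => absurd hs hspec⟩
        rw [hScard, ← Nat.card_eq_of_bijective f hbij, hcardE,
          show h - (h - 1) = 1 from by omega, Nat.mul_one]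
      · -- rank h
        push_neg at hB
        have hSzero : S = {0} := by
          ext z
          simp only [Set.mem_singleton_iff]
          exact ⟨fun hz => hB z hz, fun hz => hz ▸ hS0⟩
        refine ⟨h, Or.inl rfl, ?_, fun _ => rfl⟩
        rw [hScard, hSzero, Nat.sub_self, Nat.mul_zero, pow_zero]
        rw [Nat.card_coe_set_eq, Set.ncard_singleton]
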